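/- For λ₁, λ₂, μ > 0 with λ = λ₁+λ₂, ρ = λ/μ, ρ₁ = λ₁/μ, the unique solution (v₀₀, v₀₁) of the system (μ+λ)v₀₀ = 1 + λ₁v₀₀ + λ₂v₀₀ + μv₀₁ and (μ+λ)v₀₁ = 1 + λ₂v₀₀ + μv₀₁ satisfies v₀₀ = (1/μ)(1+ρ)/ρ₁. -/

import Mathlib

/-- The fake-updates one-state SHS equations for two-source LCFS-S give the
average age `v₀₀ = (1/μ)(1+ρ)/ρ₁`. -/
theorem lcfsS_fake_updates (lam1 lam2 mu : ℝ) (h1 : 0 < lam1) (h2 : 0 < lam2)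
    (hmu : 0 < mu)
    (v00 v01 : ℝ)
    (heq0 : (mu + (lam1 + lam2)) * v00 = 1 + lam1 * v00 + lam2 * v00 + mu * v01)
    (heq1 : (mu + (lam1 + lam2)) * v01 = 1 + lam2 * v00 + mu * v01) :
    v00 = (1/mu) * (1 + (lam1 + lam2)/mu) / (lam1/mu) := by
  have hmu' := hmu.ne'
  have h1' := h1.ne'
  field_simp
  linear_combination (lam1+lam2)*heq0 + mu*heq1
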